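/- For every odd integer p and every even nonnegative integer n, T_n(√5 · F_p / 2) = L_{pn} / 2; and for every odd integer p and every odd positive integer n, T_n(√5 · F_p / 2) = (√5/2) · F_{pn}. -/

import Mathlib

open Finset
open Real

/-- Fibonacci numbers extended to all integers: `F_{-n} = (-1)^{n-1} F_n`. -/
def fibZ (n : ℤ) : ℤ :=
  if 0 ≤ n then Nat.fib n.toNat else (-1) ^ (n.natAbs + 1) * Nat.fib n.natAbs

/-- Lucas numbers extended to all integers: `L_n = F_{n-1} + F_{n+1}`. -/
def lucasZ (n : ℤ) : ℤ := fibZ (n - 1) + fibZ (n + 1)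

lemma fibZ_binet (m : ℤ) :
    (fibZ m : ℝ) = (goldenRatio ^ m - goldenConj ^ m) / Real.sqrt 5 := by
  have hmul : goldenRatio * goldenConj = -1 := goldenRatio_mul_goldenConj
  rcases le_or_gt 0 m with h | h
  · rw [fibZ, if_pos h]
    obtain ⟨k, rfl⟩ := Int.eq_ofNat_of_zero_le h
    rw [zpow_natCast, zpow_natCast, Int.toNat_natCast]
    push_cast
    rw [Real.coe_fib_eq]
  · rw [fibZ, if_neg (not_le.2 h)]
    obtain ⟨k, rfl⟩ : ∃ k : ℕ, m = -(k : ℤ) := ⟨m.natAbs, by omega⟩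
    have hk : (-(k:ℤ)).natAbs = k := by simp
    rw [hk, zpow_neg, zpow_neg, zpow_natCast, zpow_natCast]
    have hprod : goldenRatio ^ k * goldenConj ^ k = (-1:ℝ) ^ k := by
      rw [← mul_pow, hmul]
    have h11 : (-1:ℝ) ^ k * (-1:ℝ) ^ k = 1 := by rw [← mul_pow]; norm_num
    have h1 : (goldenRatio ^ k)⁻¹ = (-1:ℝ)^k * goldenConj ^ k :=
      inv_eq_of_mul_eq_one_right (by
        rw [show goldenRatio ^ k * ((-1:ℝ)^k * goldenConj ^ k)
            = (-1:ℝ)^k * (goldenRatio ^ k * goldenConj ^ k) from by ring, hprod, h11])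
    have h2 : (goldenConj ^ k)⁻¹ = (-1:ℝ)^k * goldenRatio ^ k :=
      inv_eq_of_mul_eq_one_right (by
        rw [show goldenConj ^ k * ((-1:ℝ)^k * goldenRatio ^ k)
            = (-1:ℝ)^k * (goldenRatio ^ k * goldenConj ^ k) from by ring, hprod, h11])
    rw [h1, h2]
    push_cast
    rw [Real.coe_fib_eq]
    ring

lemma lucasZ_binet (m : ℤ) :
    (lucasZ m : ℝ) = goldenRatio ^ m + goldenConj ^ m := by
  have hφ : (goldenRatio:ℝ) ≠ 0 := goldenRatio_ne_zero
  have hψ : (goldenConj:ℝ) ≠ 0 := goldenConj_ne_zero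
  have h5 : Real.sqrt 5 ≠ 0 := by positivity
  have hsub : goldenRatio - goldenConj = Real.sqrt 5 := goldenRatio_sub_goldenConj
  have e1 : goldenRatio ^ (m-1) = goldenRatio ^ m * (-goldenConj) := by
    rw [zpow_sub₀ hφ, zpow_one, div_eq_mul_inv, inv_goldenRatio]
  have e2 : goldenConj ^ (m-1) = goldenConj ^ m * (-goldenRatio) := by
    rw [zpow_sub₀ hψ, zpow_one, div_eq_mul_inv, inv_goldenConj]
  have e3 : goldenRatio ^ (m+1) = goldenRatio ^ m * goldenRatio := by
    rw [zpow_add₀ hφ, zpow_one]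
  have e4 : goldenConj ^ (m+1) = goldenConj ^ m * goldenConj := by
    rw [zpow_add₀ hψ, zpow_one]
  rw [lucasZ]
  push_cast
  rw [fibZ_binet, fibZ_binet, e1, e2, e3, e4, ← add_div, div_eq_iff h5, ← hsub]
  ring

lemma goldConj_zpow (m : ℤ) :
    goldenConj ^ m = (-1:ℝ) ^ m * (goldenRatio ^ m)⁻¹ := by
  have h : goldenConj = -1 * goldenRatio⁻¹ := by rw [inv_goldenRatio]; ring
  rw [h, mul_zpow, inv_zpow]

lemma key_cheb (p : ℤ) (hp : Odd p) (n : ℕ) :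
    (Polynomial.Chebyshev.T ℝ n).eval (Real.sqrt 5 * (fibZ p : ℝ) / 2) =
      (goldenRatio ^ (p * n) + (goldenRatio ^ (p * n))⁻¹) / 2 := by
  have hφ : (goldenRatio:ℝ) ≠ 0 := goldenRatio_ne_zero
  have h5 : Real.sqrt 5 ≠ 0 := by positivity
  have hx : Real.sqrt 5 * (fibZ p : ℝ) / 2
      = (goldenRatio ^ p + (goldenRatio ^ p)⁻¹) / 2 := by
    rw [fibZ_binet, goldConj_zpow, hp.neg_one_zpow]
    rw [show Real.sqrt 5 * ((goldenRatio ^ p - -1 * (goldenRatio ^ p)⁻¹) / Real.sqrt 5)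
        = (goldenRatio ^ p - -1 * (goldenRatio ^ p)⁻¹) / Real.sqrt 5 * Real.sqrt 5 from
        mul_comm _ _, div_mul_cancel₀ _ h5]
    ring
  induction n using Nat.twoStepInduction with
  | zero =>
    simp [Polynomial.Chebyshev.T_zero]
  | one =>
    simp only [Nat.cast_one, Polynomial.Chebyshev.T_one, Polynomial.eval_X, mul_one]
    exact hx
  | more n ih1 ih2 =>
    have hc : ((n + 2 : ℕ) : ℤ) = (n : ℤ) + 2 := by push_cast; ring
    rw [hc, Polynomial.Chebyshev.T_add_two]
    have hc1 : ((n + 1 : ℕ) : ℤ) = (n : ℤ) + 1 := by push_cast; ring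
    rw [hc1] at ih2
    simp only [Polynomial.eval_sub, Polynomial.eval_mul, Polynomial.eval_ofNat,
      Polynomial.eval_X, Polynomial.eval_one] at *
    rw [ih1, ih2, hx]
    have e1 : goldenRatio ^ (p * ((n:ℤ) + 1)) = goldenRatio ^ (p * n) * goldenRatio ^ p := by
      rw [← zpow_add₀ hφ]; ring_nf
    have e2 : goldenRatio ^ (p * ((n:ℤ) + 2)) =
        goldenRatio ^ (p * n) * goldenRatio ^ p * goldenRatio ^ p := by
      rw [mul_assoc, ← zpow_add₀ hφ, ← zpow_add₀ hφ]; ring_nf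
    rw [e1, e2]
    have hu : goldenRatio ^ (p * (n:ℤ)) ≠ 0 := zpow_ne_zero _ hφ
    have ha : goldenRatio ^ p ≠ 0 := zpow_ne_zero _ hφ
    generalize goldenRatio ^ (p * (n:ℤ)) = u at *
    generalize goldenRatio ^ p = a at *
    field_simp
    ring

theorem stmt_6 (p : ℤ) (hp : Odd p) (n : ℕ) :
    (Even n →
      (Polynomial.Chebyshev.T ℝ n).eval (Real.sqrt 5 * (fibZ p : ℝ) / 2) =
        (lucasZ (p * n) : ℝ) / 2) ∧
    (Odd n →
      (Polynomial.Chebyshev.T ℝ n).eval (Real.sqrt 5 * (fibZ p : ℝ) / 2) =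
        Real.sqrt 5 / 2 * (fibZ (p * n) : ℝ)) := by
  have h5 : Real.sqrt 5 ≠ 0 := by positivity
  constructor
  · intro hn
    have he : Even (p * (n : ℤ)) := (Int.even_coe_nat n |>.mpr hn).mul_left p
    rw [key_cheb p hp n, lucasZ_binet, goldConj_zpow, he.neg_one_zpow, one_mul]
  · intro hn
    have ho : Odd (p * (n : ℤ)) := hp.mul (Int.odd_coe_nat n |>.mpr hn)
    rw [key_cheb p hp n, fibZ_binet, goldConj_zpow, ho.neg_one_zpow]
    rw [show Real.sqrt 5 / 2 * ((goldenRatio ^ (p*(n:ℤ)) - -1 * (goldenRatio ^ (p*(n:ℤ)))⁻¹) / Real.sqrt 5)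
        = (goldenRatio ^ (p*(n:ℤ)) - -1 * (goldenRatio ^ (p*(n:ℤ)))⁻¹) / Real.sqrt 5 * Real.sqrt 5 / 2 from
        by ring, div_mul_cancel₀ _ h5]
    ring
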